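/- arXiv:2112.10179 — 4 statements merged into one kernel-verified Lean document; each statement's English description precedes it below -/
import Mathlib

section
/- Let t ≥ 0 be a real number and N ≥ 1 a natural number. In the real Hilbert space ℓ²(ℕ), define the unit vector ψ with coordinates ψ_k = e^{−t²/2} · t^k / √(k!) for all k ∈ ℕ, and the truncated unit vector ψ_N with coordinates (ψ_N)_k = B^{−1/2} · t^k / √(k!) for k < N and (ψ_N)_k = 0 for k ≥ N, where B = ∑_{k=0}^{N−1} t^{2k} / k!. Then ‖ψ − ψ_N‖² ≤ 2 t^{2N} / N!. -/
lemma exp_tsum' (x : ℝ) : ∑' n : ℕ, x ^ n / (Nat.factorial n : ℝ) = Real.exp x := by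
  rw [Real.exp_eq_exp_ℝ, NormedSpace.exp_eq_tsum_div]


/-- **Truncation error of the coherent state** (Eq. (10)): for `t ≥ 0` and `N ≥ 1`,
if `ψ ∈ ℓ²(ℕ)` is the coherent state with coordinates `ψ_k = e^{−t²/2} t^k / √(k!)`
and `ψ_N ∈ ℓ²(ℕ)` is its normalized truncation to the first `N` coordinates,
with normalization factor `B = ∑_{k<N} t^{2k}/k!`, then `‖ψ − ψ_N‖² ≤ 2 t^{2N}/N!`. -/
theorem coherent_state_truncation (t : ℝ) (ht : 0 ≤ t) (N : ℕ) (hN : 1 ≤ N)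
    (ψ ψN : lp (fun _ : ℕ => ℝ) 2)
    (hψ : ∀ k : ℕ, ψ k = Real.exp (-(t ^ 2) / 2) * t ^ k / Real.sqrt (Nat.factorial k))
    (hψN : ∀ k : ℕ, ψN k =
      if k < N then
        (Real.sqrt (∑ j ∈ Finset.range N, t ^ (2 * j) / (Nat.factorial j)))⁻¹ *
          t ^ k / Real.sqrt (Nat.factorial k)
      else 0) :
    ‖ψ - ψN‖ ^ 2 ≤ 2 * t ^ (2 * N) / Nat.factorial N := by
  set x := t ^ 2 with hxdef
  have hx0 : 0 ≤ x := sq_nonneg t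
  set a : ℕ → ℝ := fun k => x ^ k / Nat.factorial k with hadef
  have ha0 : ∀ k, 0 ≤ a k := fun k => div_nonneg (pow_nonneg hx0 k) (Nat.cast_nonneg _)
  have hsum : Summable a := Real.summable_pow_div_factorial x
  have htsum : ∑' k, a k = Real.exp x := exp_tsum' x
  set B : ℝ := ∑ j ∈ Finset.range N, t ^ (2 * j) / (Nat.factorial j) with hBdef
  have hBa : B = ∑ j ∈ Finset.range N, a j := by
    refine Finset.sum_congr rfl fun j _ => ?_
    simp only [hadef]
    rw [← pow_mul]
  have hB1 : 1 ≤ B := by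
    have h0 : a 0 ≤ ∑ j ∈ Finset.range N, a j :=
      Finset.single_le_sum (fun i _ => ha0 i) (Finset.mem_range.mpr hN)
    have : a 0 = 1 := by simp [hadef]
    rw [hBa]; linarith
  have hB0 : (0:ℝ) < B := lt_of_lt_of_le one_pos hB1
  have hBexp : B ≤ Real.exp x := by
    rw [hBa, ← htsum]
    exact Summable.sum_le_tsum _ (fun i _ => ha0 i) hsum
  have hfac : ∀ k : ℕ, (0:ℝ) < Nat.factorial k := fun k => by exact_mod_cast Nat.factorial_pos k
  -- pointwise square identity
  have hsq : ∀ k : ℕ, (t ^ k / Real.sqrt (Nat.factorial k)) * (t ^ k / Real.sqrt (Nat.factorial k)) = a k := by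
    intro k
    rw [div_mul_div_comm, ← pow_add, Real.mul_self_sqrt (hfac k).le]
    simp only [hadef]
    rw [← pow_mul, two_mul]
  have hexpsq : Real.exp (-(t^2)/2) * Real.exp (-(t^2)/2) = Real.exp (-x) := by
    rw [← Real.exp_add, hxdef]; ring_nf
  -- inner products
  have hiψψ : (inner ℝ ψ ψ : ℝ) = 1 := by
    rw [lp.inner_eq_tsum]
    have hc : ∀ k : ℕ, (inner ℝ (ψ k) (ψ k) : ℝ) = Real.exp (-x) * a k := by
      intro k
      have : (inner ℝ (ψ k) (ψ k) : ℝ) = ψ k * ψ k := rfl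
      rw [this, hψ k, mul_div_assoc, mul_mul_mul_comm, hexpsq, hsq k]
    rw [tsum_congr hc, tsum_mul_left, htsum, ← Real.exp_add]
    simp
  have hψNsupp : ∀ k ∉ Finset.range N, (inner ℝ (ψ k) (ψN k) : ℝ) = 0 := by
    intro k hk
    have : (inner ℝ (ψ k) (ψN k) : ℝ) = ψ k * ψN k := by rw [mul_comm]; rfl
    rw [this, hψN k, if_neg (by simpa using hk), mul_zero]
  have hiψψN : (inner ℝ ψ ψN : ℝ) = Real.exp (-(t^2)/2) * Real.sqrt B := by
    rw [lp.inner_eq_tsum, tsum_eq_sum hψNsupp]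
    have hc : ∀ k ∈ Finset.range N, (inner ℝ (ψ k) (ψN k) : ℝ)
        = Real.exp (-(t^2)/2) * (Real.sqrt B)⁻¹ * a k := by
      intro k hk
      have h1 : (inner ℝ (ψ k) (ψN k) : ℝ) = ψ k * ψN k := by rw [mul_comm]; rfl
      rw [h1, hψ k, hψN k, if_pos (Finset.mem_range.mp hk), mul_div_assoc, mul_div_assoc,
        mul_mul_mul_comm, hsq k]
    rw [Finset.sum_congr rfl hc, ← Finset.mul_sum, ← hBa, mul_assoc]
    congr 1
    rw [← Real.sqrt_mul_self hB0.le]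
    field_simp
    rw [Real.sq_sqrt (Real.sqrt_nonneg _)]
  have hiψNψN : (inner ℝ ψN ψN : ℝ) = 1 := by
    rw [lp.inner_eq_tsum, tsum_eq_sum (s := Finset.range N) (fun k hk => by
      have : (inner ℝ (ψN k) (ψN k) : ℝ) = ψN k * ψN k := rfl
      rw [this, hψN k, if_neg (by simpa using hk), mul_zero])]
    have hc : ∀ k ∈ Finset.range N, (inner ℝ (ψN k) (ψN k) : ℝ) = B⁻¹ * a k := by
      intro k hk
      have h1 : (inner ℝ (ψN k) (ψN k) : ℝ) = ψN k * ψN k := rfl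
      rw [h1, hψN k, if_pos (Finset.mem_range.mp hk), mul_div_assoc, mul_mul_mul_comm, hsq k,
        ← Real.sqrt_inv, Real.mul_self_sqrt (inv_nonneg.mpr hB0.le)]
    rw [Finset.sum_congr rfl hc, ← Finset.mul_sum, ← hBa, inv_mul_cancel₀ hB0.ne']
  -- norm identity
  have hnorm : ‖ψ - ψN‖ ^ 2 = 2 - 2 * (Real.exp (-(t^2)/2) * Real.sqrt B) := by
    rw [norm_sub_sq_real, ← real_inner_self_eq_norm_sq, ← real_inner_self_eq_norm_sq,
      hiψψ, hiψψN, hiψNψN]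
    ring
  -- set r
  set r : ℝ := Real.exp (-x) * B with hrdef
  have hr0 : 0 ≤ r := mul_nonneg (Real.exp_nonneg _) hB0.le
  have hE : Real.exp (-x) * Real.exp x = 1 := by rw [← Real.exp_add]; simp
  have hr1 : r ≤ 1 := by nlinarith [Real.exp_pos (-x)]
  have hsqrtr : Real.exp (-(t^2)/2) * Real.sqrt B = Real.sqrt r := by
    rw [hrdef, Real.sqrt_mul (Real.exp_nonneg _)]
    congr 1
    rw [← hexpsq, Real.sqrt_mul_self (Real.exp_nonneg _)]
  have h2 : r ≤ Real.sqrt r := by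
    nlinarith [Real.sq_sqrt hr0, Real.sqrt_nonneg r]
  -- tail bound
  have htail : Real.exp x - B ≤ x ^ N / Nat.factorial N * Real.exp x := by
    have hsumtail : Summable (fun i => a (i + N)) := (summable_nat_add_iff N).2 hsum
    have hsplit : ∑ i ∈ Finset.range N, a i + ∑' i, a (i + N) = ∑' i, a i :=
      Summable.sum_add_tsum_nat_add N hsum
    have hterm : ∀ i : ℕ, a (i + N) ≤ x ^ N / Nat.factorial N * a i := by
      intro i
      have hnat : (Nat.factorial N * Nat.factorial i : ℝ) ≤ Nat.factorial (i + N) := by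
        exact_mod_cast Nat.le_of_dvd (Nat.factorial_pos _)
          (by simpa [Nat.add_comm] using Nat.factorial_mul_factorial_dvd_factorial_add N i)
      have h1 : a (i + N) ≤ x ^ (i + N) / (Nat.factorial N * Nat.factorial i) := by
        exact div_le_div_of_nonneg_left (pow_nonneg hx0 _)
          (by positivity) hnat
      calc a (i + N) ≤ x ^ (i + N) / (Nat.factorial N * Nat.factorial i) := h1
        _ = x ^ N / Nat.factorial N * a i := by
            rw [hadef, pow_add]
            field_simp
    have hle : ∑' i, a (i + N) ≤ ∑' i, x ^ N / Nat.factorial N * a i :=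
      Summable.tsum_le_tsum hterm hsumtail (hsum.mul_left _)
    rw [tsum_mul_left, htsum] at hle
    have hT : ∑' i, a (i + N) = Real.exp x - B := by
      rw [hBa]; rw [htsum] at hsplit; linarith
    linarith [hle, hT]
  have h4 : 1 - r ≤ x ^ N / Nat.factorial N := by
    have := mul_le_mul_of_nonneg_left htail (Real.exp_nonneg (-x))
    nlinarith [this, hE]
  rw [hnorm, hsqrtr, pow_mul, ← hxdef, mul_div_assoc]
  linarith
end

section
/- Let x⁽¹⁾,…,x⁽ᵐ⁾ ∈ ℝ^d be pairwise distinct points and σ > 0, and let K be the m×m real matrix with entries K_{ij} = e^{−‖x⁽ⁱ⁾ − x⁽ʲ⁾‖²/(2σ²)}. Then K is positive definite (in particular invertible). -/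
open MeasureTheory Real

noncomputable section GaussAux

variable {d : ℕ}

/-- The multiplicative character `t ↦ exp ⟪a, t⟫` on `ℝ^d`. -/
def gaussChara (a : EuclideanSpace ℝ (Fin d)) :
    Multiplicative (EuclideanSpace ℝ (Fin d)) →* ℝ where
  toFun t := Real.exp (inner ℝ a t.toAdd : ℝ)
  map_one' := by simp
  map_mul' s t := by simp only [toAdd_mul, inner_add_right, Real.exp_add]

lemma gaussChara_inj : Function.Injective (gaussChara (d := d)) := by
  intro a a' h
  have := DFunLike.congr_fun h (Multiplicative.ofAdd (a - a'))
  simp only [gaussChara, MonoidHom.coe_mk, OneHom.coe_mk, toAdd_ofAdd] at this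
  have h2 : (inner ℝ a (a - a') : ℝ) = inner ℝ a' (a - a') := Real.exp_injective this
  have h3 : (inner ℝ (a - a') (a - a') : ℝ) = 0 := by rw [inner_sub_left, h2]; ring
  exact sub_eq_zero.mp (inner_self_eq_zero.mp h3)

/-- Distinct Gaussian bumps are linearly independent. -/
lemma gauss_li {b : ℝ} (hb : 0 < b) {m : ℕ} {x : Fin m → EuclideanSpace ℝ (Fin d)}
    (hx : Function.Injective x) {c : Fin m → ℝ}
    (h : ∀ t : EuclideanSpace ℝ (Fin d), ∑ i, c i * rexp (-b * ‖t - x i‖ ^ 2) = 0) :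
    c = 0 := by
  have hinj : Function.Injective (fun i => gaussChara ((2 * b) • x i)) := by
    intro i j hij
    exact hx (smul_right_injective _ (by positivity) (gaussChara_inj hij))
  have li : LinearIndependent ℝ
      (fun i => (gaussChara ((2 * b) • x i) : Multiplicative (EuclideanSpace ℝ (Fin d)) → ℝ)) :=
    (linearIndependent_monoidHom (Multiplicative (EuclideanSpace ℝ (Fin d))) ℝ).comp
      (fun i => gaussChara ((2 * b) • x i)) hinj
  have key : ∑ i, (c i * rexp (-b * ‖x i‖ ^ 2)) •
      (gaussChara ((2 * b) • x i) : Multiplicative (EuclideanSpace ℝ (Fin d)) → ℝ) = 0 := by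
    funext t
    have ht := h t.toAdd
    simp only [Finset.sum_apply, Pi.smul_apply, Pi.zero_apply, smul_eq_mul]
    have expand : ∀ i, c i * rexp (-b * ‖t.toAdd - x i‖ ^ 2) =
        (c i * rexp (-b * ‖x i‖ ^ 2) * (gaussChara ((2 * b) • x i) t)) *
          rexp (-b * ‖t.toAdd‖ ^ 2) := by
      intro i
      simp only [gaussChara, MonoidHom.coe_mk, OneHom.coe_mk]
      rw [mul_assoc, mul_assoc, ← Real.exp_add, ← Real.exp_add]
      congr 1
      rw [norm_sub_sq_real, real_inner_smul_left, real_inner_comm]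
      ring
    simp_rw [expand] at ht
    rw [← Finset.sum_mul] at ht
    exact (mul_eq_zero.mp ht).resolve_right (Real.exp_ne_zero _)
  have hz := Fintype.linearIndependent_iff.mp li _ key
  funext i
  have hi : c i * rexp (-b * ‖x i‖ ^ 2) = 0 := hz i
  have hpos := Real.exp_pos (-b * ‖x i‖ ^ 2)
  simpa [Real.exp_ne_zero] using mul_eq_zero.mp hi

lemma integrable_gauss {c : ℝ} (hc : 0 < c) (a : EuclideanSpace ℝ (Fin d)) :
    Integrable (fun t : EuclideanSpace ℝ (Fin d) => rexp (-c * ‖t - a‖ ^ 2)) := by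
  have h0 : Integrable (fun t : EuclideanSpace ℝ (Fin d) => rexp (-c * ‖t‖ ^ 2)) := by
    have := (GaussianFourier.integrable_cexp_neg_mul_sq_norm_add
      (V := EuclideanSpace ℝ (Fin d)) (b := (c : ℂ)) (by simpa using hc) 0 0).norm
    refine this.congr ?_
    filter_upwards with t
    rw [Complex.norm_exp]
    norm_num [← Complex.ofReal_pow]
  exact h0.comp_sub_right a

lemma gauss_mul {b : ℝ} (a a' t : EuclideanSpace ℝ (Fin d)) :
    rexp (-b * ‖t - a‖ ^ 2) * rexp (-b * ‖t - a'‖ ^ 2) =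
      rexp (-(b / 2) * ‖a - a'‖ ^ 2) *
        rexp (-(2 * b) * ‖t - (2 : ℝ)⁻¹ • (a + a')‖ ^ 2) := by
  set m := (2 : ℝ)⁻¹ • (a + a') with hm
  have par := parallelogram_law_with_norm ℝ (t - a) (t - a')
  have h1 : t - a + (t - a') = (2 : ℝ) • (t - m) := by rw [hm]; module
  have h2 : t - a - (t - a') = a' - a := by module
  rw [h1, h2, norm_smul, norm_sub_rev a' a] at par
  rw [← Real.exp_add, ← Real.exp_add]
  congr 1
  have hn : ‖(2 : ℝ)‖ = 2 := by norm_num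
  rw [hn] at par
  have par' : 4 * ‖t - m‖ ^ 2 + ‖a - a'‖ ^ 2 = 2 * (‖t - a‖ ^ 2 + ‖t - a'‖ ^ 2) := by
    ring_nf at par ⊢; linarith
  linear_combination (b / 2) * par'

lemma gauss_mul_integrable {b : ℝ} (hb : 0 < b) (a a' : EuclideanSpace ℝ (Fin d)) :
    Integrable (fun t : EuclideanSpace ℝ (Fin d) =>
      rexp (-b * ‖t - a‖ ^ 2) * rexp (-b * ‖t - a'‖ ^ 2)) := by
  simp_rw [gauss_mul a a']
  exact (integrable_gauss (by positivity) _).const_mul _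

lemma gauss_integral {b : ℝ} (hb : 0 < b) (a a' : EuclideanSpace ℝ (Fin d)) :
    ∫ t : EuclideanSpace ℝ (Fin d), rexp (-b * ‖t - a‖ ^ 2) * rexp (-b * ‖t - a'‖ ^ 2)
      = (∫ t : EuclideanSpace ℝ (Fin d), rexp (-(2 * b) * ‖t‖ ^ 2))
          * rexp (-(b / 2) * ‖a - a'‖ ^ 2) := by
  simp_rw [gauss_mul a a']
  rw [MeasureTheory.integral_const_mul,
    integral_sub_right_eq_self
      (fun t : EuclideanSpace ℝ (Fin d) => rexp (-(2 * b) * ‖t‖ ^ 2)) ((2 : ℝ)⁻¹ • (a + a'))]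
  ring

end GaussAux

/-- **The Gaussian interpolation matrix is positive definite**: for pairwise distinct
points `x_1, …, x_m ∈ ℝ^d` and `σ > 0`, the matrix `K_{ij} = e^{−‖x_i − x_j‖²/(2σ²)}`
is positive definite (in particular invertible). -/
theorem gaussian_kernel_matrix_posDef {m d : ℕ}
    (x : Fin m → EuclideanSpace ℝ (Fin d)) (hx : Function.Injective x)
    (σ : ℝ) (hσ : 0 < σ) :
    (Matrix.of fun i j : Fin m =>
      Real.exp (-‖x i - x j‖ ^ 2 / (2 * σ ^ 2))).PosDef := by
  set b : ℝ := (σ ^ 2)⁻¹ with hbdef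
  have hb : 0 < b := by positivity
  have hexp : ∀ i j, -‖x i - x j‖ ^ 2 / (2 * σ ^ 2) = -(b / 2) * ‖x i - x j‖ ^ 2 := by
    intro i j
    rw [hbdef]
    field_simp
  refine Matrix.PosDef.of_dotProduct_mulVec_pos ?_ ?_
  · -- Hermitian
    ext i j
    simp only [Matrix.conjTranspose_apply, Matrix.of_apply, star_trivial, norm_sub_rev (x j)]
  · intro c hc
    set φ : Fin m → EuclideanSpace ℝ (Fin d) → ℝ :=
      fun i t => rexp (-b * ‖t - x i‖ ^ 2) with hφ
    set g : EuclideanSpace ℝ (Fin d) → ℝ := fun t => ∑ i, c i * φ i t with hg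
    set C : ℝ := ∫ t : EuclideanSpace ℝ (Fin d), rexp (-(2 * b) * ‖t‖ ^ 2) with hC
    have hCpos : 0 < C := by
      rw [hC, GaussianFourier.integral_rexp_neg_mul_sq_norm (by positivity)]
      positivity
    -- g is not identically zero
    have hgne : ∃ t, g t ≠ 0 := by
      by_contra hcon
      push_neg at hcon
      exact hc (gauss_li hb hx hcon)
    -- g² is integrable
    have hsq : ∀ t, g t ^ 2 = ∑ i, ∑ j, (c i * c j) * (φ i t * φ j t) := by
      intro t
      rw [hg, sq, Finset.sum_mul_sum]
      exact Finset.sum_congr rfl fun i _ => Finset.sum_congr rfl fun j _ => by ring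
    have hterm : ∀ i j : Fin m,
        Integrable (fun t : EuclideanSpace ℝ (Fin d) => (c i * c j) * (φ i t * φ j t)) :=
      fun i j => (gauss_mul_integrable hb (x i) (x j)).const_mul _
    have hint : Integrable (fun t => g t ^ 2) := by
      simp_rw [hsq]
      exact integrable_finset_sum _ fun i _ => integrable_finset_sum _ fun j _ => hterm i j
    -- positivity of ∫ g²
    have hgc : Continuous g := by
      rw [hg]; simp only [hφ]
      refine continuous_finset_sum _ fun i _ => continuous_const.mul ?_
      exact Real.continuous_exp.comp
        (continuous_const.mul ((continuous_id.sub continuous_const).norm.pow 2))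
    have hIpos : 0 < ∫ t, g t ^ 2 := by
      rw [integral_pos_iff_support_of_nonneg (fun t => sq_nonneg (g t)) hint]
      obtain ⟨t₀, ht₀⟩ := hgne
      have hopen : IsOpen {t | g t ≠ 0} := isOpen_ne.preimage hgc
      have hsub : {t | g t ≠ 0} ⊆ Function.support fun t => g t ^ 2 := by
        intro t ht
        simp only [Function.mem_support]
        exact pow_ne_zero 2 ht
      calc (0 : ENNReal) < volume {t | g t ≠ 0} :=
            hopen.measure_pos volume ⟨t₀, ht₀⟩
        _ ≤ volume (Function.support fun t => g t ^ 2) := measure_mono hsub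
    -- ∫ g² = C * (c ⬝ᵥ K *ᵥ c)
    have hEq : ∫ t, g t ^ 2 = C * (dotProduct c ((Matrix.of fun i j : Fin m =>
        Real.exp (-‖x i - x j‖ ^ 2 / (2 * σ ^ 2))).mulVec c)) := by
      simp_rw [hsq]
      rw [integral_finset_sum _ fun i _ => integrable_finset_sum _ fun j _ => hterm i j]
      simp_rw [fun i => integral_finset_sum Finset.univ fun j _ => hterm i j,
        MeasureTheory.integral_const_mul]
      have hij : ∀ i j : Fin m, ∫ t : EuclideanSpace ℝ (Fin d), φ i t * φ j t
          = C * rexp (-(b / 2) * ‖x i - x j‖ ^ 2) := fun i j => by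
        rw [hφ]
        exact gauss_integral hb (x i) (x j)
      simp_rw [hij]
      simp only [dotProduct, Matrix.mulVec, Matrix.of_apply]
      rw [Finset.mul_sum]
      refine Finset.sum_congr rfl fun i _ => ?_
      rw [Finset.mul_sum, Finset.mul_sum]
      refine Finset.sum_congr rfl fun j _ => ?_
      rw [hexp i j]
      ring
    have hX := hIpos
    rw [hEq] at hX
    simp only [star_trivial]
    nlinarith [hX, hCpos]
end

section
/- Let A and E be real m×m matrices with A invertible, suppose γ := ‖A⁻¹E‖ < 1 (so that A + E is invertible), and let y ∈ ℝ^m be nonzero. Let c* = A⁻¹y and c = (A+E)⁻¹y (both nonzero). Then the normalized solutions satisfy ‖ c*/‖c*‖ − c/‖c‖ ‖ ≤ 2‖E‖·‖A⁻¹‖²·‖A‖ / (1 − γ). -/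
open scoped Matrix.Norms.L2Operator

/-- Stability of normalization: `‖u/‖u‖ - v/‖v‖‖ ≤ 2‖u - v‖/‖u‖`. -/
lemma normalize_sub_normalize_le {V : Type*} [NormedAddCommGroup V] [NormedSpace ℝ V]
    {u v : V} (hu : u ≠ 0) (hv : v ≠ 0) :
    ‖(1 / ‖u‖) • u - (1 / ‖v‖) • v‖ ≤ 2 * ‖u - v‖ / ‖u‖ := by
  have hu0 : (0:ℝ) < ‖u‖ := norm_pos_iff.2 hu
  have hv0 : (0:ℝ) < ‖v‖ := norm_pos_iff.2 hv
  have key : (1 / ‖u‖) • u - (1 / ‖v‖) • v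
      = (1 / ‖u‖) • (u - v) + (1 / ‖u‖ - 1 / ‖v‖) • v := by
    rw [smul_sub, sub_smul]; abel
  rw [key]
  have h1 : ‖(1 / ‖u‖) • (u - v)‖ = ‖u - v‖ / ‖u‖ := by
    rw [norm_smul, Real.norm_eq_abs, abs_of_pos (by positivity), one_div,
      inv_mul_eq_div]
  have h2 : ‖(1 / ‖u‖ - 1 / ‖v‖) • v‖ ≤ ‖u - v‖ / ‖u‖ := by
    rw [norm_smul, Real.norm_eq_abs]
    have habs : |1 / ‖u‖ - 1 / ‖v‖| = |‖v‖ - ‖u‖| / (‖u‖ * ‖v‖) := by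
      rw [div_sub_div _ _ (ne_of_gt hu0) (ne_of_gt hv0), abs_div,
        abs_of_pos (mul_pos hu0 hv0), one_mul, mul_one]
    rw [habs, div_mul_eq_mul_div, mul_comm ‖u‖ ‖v‖, ← div_div,
      mul_div_assoc, div_self (ne_of_gt hv0), mul_one]
    have : |‖v‖ - ‖u‖| ≤ ‖u - v‖ := by
      rw [norm_sub_rev]; exact abs_norm_sub_norm_le v u
    exact div_le_div_of_nonneg_right this hu0.le
  calc ‖(1 / ‖u‖) • (u - v) + (1 / ‖u‖ - 1 / ‖v‖) • v‖
      ≤ ‖(1 / ‖u‖) • (u - v)‖ + ‖(1 / ‖u‖ - 1 / ‖v‖) • v‖ := norm_add_le _ _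
    _ ≤ ‖u - v‖ / ‖u‖ + ‖u - v‖ / ‖u‖ := by rw [h1]; exact add_le_add_right h2 _
    _ = 2 * ‖u - v‖ / ‖u‖ := by ring

/-- **Perturbation of the normalized solution of a linear system**: if `A` is
invertible, `γ = ‖A⁻¹E‖ < 1` (ℓ²-operator norm) and `y ≠ 0`, then the normalized
solutions `c* = A⁻¹y` and `c = (A+E)⁻¹y` satisfy
`‖c*/‖c*‖ − c/‖c‖‖ ≤ 2‖E‖‖A⁻¹‖²‖A‖/(1 − γ)`. -/
theorem normalized_solution_perturbation {m : ℕ} (A E : Matrix (Fin m) (Fin m) ℝ)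
    (hA : IsUnit A) (hγ : ‖A⁻¹ * E‖ < 1)
    (y : EuclideanSpace ℝ (Fin m)) (hy : y ≠ 0)
    (cstar c : EuclideanSpace ℝ (Fin m))
    (hcstar : ∀ i, cstar i = A⁻¹.mulVec y i)
    (hc : ∀ i, c i = (A + E)⁻¹.mulVec y i) :
    ‖(1 / ‖cstar‖) • cstar - (1 / ‖c‖) • c‖ ≤
      2 * ‖E‖ * ‖A⁻¹‖ ^ 2 * ‖A‖ / (1 - ‖A⁻¹ * E‖) := by
  -- m is positive since y ≠ 0
  have hm : 0 < m := by
    rcases Nat.eq_zero_or_pos m with h | h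
    · subst h
      haveI : Subsingleton (EuclideanSpace ℝ (Fin 0)) :=
        (EuclideanSpace.equiv (Fin 0) ℝ).injective.subsingleton
      exact absurd (Subsingleton.elim y 0) hy
    · exact h
  haveI : Nontrivial (Matrix (Fin m) (Fin m) ℝ) := by
    refine ⟨0, 1, fun h => one_ne_zero (α := ℝ) ?_⟩
    have := congrFun (congrFun h ⟨0, hm⟩) ⟨0, hm⟩
    simpa using this.symm
  have hone : ‖(1 : Matrix (Fin m) (Fin m) ℝ)‖ = 1 := norm_one
  -- invertibility facts
  have hAd : IsUnit A.det := (Matrix.isUnit_iff_isUnit_det A).mp hA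
  have hA1 : A * A⁻¹ = 1 := Matrix.mul_nonsing_inv A hAd
  have hA2 : A⁻¹ * A = 1 := Matrix.nonsing_inv_mul A hAd
  have ht : ‖-(A⁻¹ * E)‖ < 1 := by rwa [norm_neg]
  have hUnit1 : IsUnit (1 + A⁻¹ * E) := by
    have := (Units.oneSub (-(A⁻¹ * E)) ht).isUnit
    rwa [Units.val_oneSub, sub_neg_eq_add] at this
  have hAE : A + E = A * (1 + A⁻¹ * E) := by
    rw [mul_add, mul_one, ← mul_assoc, hA1, one_mul]
  have hUAE : IsUnit (A + E) := by rw [hAE]; exact hA.mul hUnit1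
  have hAEd : IsUnit (A + E).det := (Matrix.isUnit_iff_isUnit_det _).mp hUAE
  have hAE1 : (A + E) * (A + E)⁻¹ = 1 := Matrix.mul_nonsing_inv _ hAEd
  -- matrix identity: A⁻¹ - (A+E)⁻¹ = (A⁻¹E)(A+E)⁻¹
  have hM : A⁻¹ - (A + E)⁻¹ = (A⁻¹ * E) * (A + E)⁻¹ := by
    have h1 : A⁻¹ * (A + E) = 1 + A⁻¹ * E := by rw [mul_add, hA2]
    calc A⁻¹ - (A + E)⁻¹ = A⁻¹ * ((A + E) * (A + E)⁻¹) - 1 * (A + E)⁻¹ := by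
          rw [hAE1, mul_one, one_mul]
      _ = (1 + A⁻¹ * E) * (A + E)⁻¹ - 1 * (A + E)⁻¹ := by rw [← mul_assoc, h1]
      _ = (A⁻¹ * E) * (A + E)⁻¹ := by rw [add_mul, one_mul]; abel
  -- nonvanishing of c and cstar
  have hcs0 : cstar ≠ 0 := by
    intro h
    apply hy
    have h0 : A⁻¹.mulVec y = (0 : Fin m → ℝ) := by
      funext i; rw [← hcstar i, h]; rfl
    have : y = (EuclideanSpace.equiv (Fin m) ℝ).symm (A.mulVec (A⁻¹.mulVec y)) := by
      rw [Matrix.mulVec_mulVec, hA1, Matrix.one_mulVec]; rfl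
    rw [this, h0]
    ext i
    simp [Matrix.mulVec_zero]
  have hc0 : c ≠ 0 := by
    intro h
    apply hy
    have h0 : (A + E)⁻¹.mulVec y = (0 : Fin m → ℝ) := by
      funext i; rw [← hc i, h]; rfl
    have : y = (EuclideanSpace.equiv (Fin m) ℝ).symm ((A + E).mulVec ((A + E)⁻¹.mulVec y)) := by
      rw [Matrix.mulVec_mulVec, hAE1, Matrix.one_mulVec]; rfl
    rw [this, h0]
    ext i
    simp [Matrix.mulVec_zero]
  -- the difference
  have hdiff : cstar - c = (EuclideanSpace.equiv (Fin m) ℝ).symm ((A⁻¹ * E).mulVec c) := by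
    ext i
    have : cstar i - c i = ((A⁻¹ - (A + E)⁻¹).mulVec y) i := by
      rw [hcstar i, hc i, Matrix.sub_mulVec]; rfl
    have h2 : ((A⁻¹ - (A + E)⁻¹).mulVec y) i = ((A⁻¹ * E).mulVec c) i := by
      rw [hM, ← Matrix.mulVec_mulVec]
      congr 1
      funext j
      exact (hc j).symm
    calc (cstar - c) i = cstar i - c i := rfl
      _ = ((A⁻¹ * E).mulVec c) i := this.trans h2
  have hdn : ‖cstar - c‖ ≤ ‖A⁻¹ * E‖ * ‖c‖ := by
    rw [hdiff]; exact Matrix.l2_opNorm_mulVec _ c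
  -- norm inequalities
  have hγ1 : ‖A⁻¹ * E‖ ≤ ‖A⁻¹‖ * ‖E‖ := norm_mul_le _ _
  have h1an : 1 ≤ ‖A⁻¹‖ * ‖A‖ := by
    calc (1:ℝ) = ‖(1 : Matrix (Fin m) (Fin m) ℝ)‖ := hone.symm
      _ = ‖A⁻¹ * A‖ := by rw [hA2]
      _ ≤ ‖A⁻¹‖ * ‖A‖ := norm_mul_le _ _
  have hcpos : (0:ℝ) < ‖c‖ := norm_pos_iff.2 hc0
  -- main estimate
  have main : ‖(1 / ‖cstar‖) • cstar - (1 / ‖c‖) • c‖ ≤ 2 * ‖A⁻¹ * E‖ := by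
    have := normalize_sub_normalize_le hc0 hcs0
    rw [norm_sub_rev ((1 / ‖c‖) • c), norm_sub_rev c] at this
    refine this.trans ?_
    rw [div_le_iff₀ hcpos]
    calc 2 * ‖cstar - c‖ ≤ 2 * (‖A⁻¹ * E‖ * ‖c‖) := by linarith
      _ = 2 * ‖A⁻¹ * E‖ * ‖c‖ := by ring
  refine main.trans ?_
  rw [le_div_iff₀ (by linarith : (0:ℝ) < 1 - ‖A⁻¹ * E‖)]
  have hg0 : (0:ℝ) ≤ ‖A⁻¹ * E‖ := norm_nonneg _
  have hae : (0:ℝ) ≤ ‖A⁻¹‖ * ‖E‖ := mul_nonneg (norm_nonneg _) (norm_nonneg _)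
  nlinarith [mul_le_mul_of_nonneg_left h1an hae, norm_nonneg A, norm_nonneg A⁻¹,
    norm_nonneg E, mul_nonneg hg0 hg0]
end

section
/- Let u, v ∈ ℂ^n be unit vectors and define w ∈ ℂ^(n×n) in coordinates by w(i,j) = (u_i · v_j + v_i · u_j)/2. Then ‖w‖² = 1/2 + |⟪u, v⟫|²/2. -/
open scoped InnerProductSpace
open Finset

/-- **Success probability of the swap test** (Eq. (22)): for unit vectors `u, v ∈ ℂⁿ`,
the vector `w` with coordinates `w(i,j) = (u_i v_j + v_i u_j)/2` (the swap-test state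
after projecting the ancilla onto `|+⟩`) satisfies `‖w‖² = 1/2 + |⟪u,v⟫|²/2`. -/
theorem swap_test_probability {n : ℕ} (u v : EuclideanSpace ℂ (Fin n))
    (hu : ‖u‖ = 1) (hv : ‖v‖ = 1)
    (w : EuclideanSpace ℂ (Fin n × Fin n))
    (hw : ∀ i j : Fin n, w (i, j) = (u i * v j + v i * u j) / 2) :
    ‖w‖ ^ 2 = 1 / 2 + ‖(⟪u, v⟫_ℂ)‖ ^ 2 / 2 := by
  have huu : ⟪u, u⟫_ℂ = 1 := by
    rw [inner_self_eq_norm_sq_to_K, hu]; norm_num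
  have hvv : ⟪v, v⟫_ℂ = 1 := by
    rw [inner_self_eq_norm_sq_to_K, hv]; norm_num
  have hvu : ⟪v, u⟫_ℂ = starRingEnd ℂ ⟪u, v⟫_ℂ := by
    rw [← inner_conj_symm]
  have key : ⟪w, w⟫_ℂ = (⟪u,u⟫_ℂ * ⟪v,v⟫_ℂ + ⟪u,v⟫_ℂ * ⟪v,u⟫_ℂ +
      ⟪v,u⟫_ℂ * ⟪u,v⟫_ℂ + ⟪v,v⟫_ℂ * ⟪u,u⟫_ℂ) / 4 := by
    simp only [PiLp.inner_apply, RCLike.inner_apply]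
    have : ∀ p : Fin n × Fin n,
        w p * (starRingEnd ℂ) (w p) =
        ((u p.1 * starRingEnd ℂ (u p.1)) * (v p.2 * starRingEnd ℂ (v p.2))
        + (v p.1 * starRingEnd ℂ (u p.1)) * (u p.2 * starRingEnd ℂ (v p.2))
        + (u p.1 * starRingEnd ℂ (v p.1)) * (v p.2 * starRingEnd ℂ (u p.2))
        + (v p.1 * starRingEnd ℂ (v p.1)) * (u p.2 * starRingEnd ℂ (u p.2))) / 4 := by
      intro ⟨i, j⟩
      rw [hw i j]
      simp only [map_div₀, map_add, map_mul, map_ofNat]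
      ring
    rw [Fintype.sum_congr _ _ this]
    rw [← Finset.sum_div]
    congr 1
    simp only [Finset.sum_add_distrib, Fintype.sum_prod_type]
    congr 1
    · congr 1
      · congr 1
        · rw [← Finset.sum_mul_sum]
        · rw [← Finset.sum_mul_sum]
      · rw [← Finset.sum_mul_sum]
    · rw [← Finset.sum_mul_sum]
  have hnorm : (‖w‖ ^ 2 : ℂ) = ⟪w, w⟫_ℂ := by
    rw [inner_self_eq_norm_sq_to_K]; norm_num
  have : (‖w‖ ^ 2 : ℂ) = 1/2 + (‖(⟪u, v⟫_ℂ)‖)^2 / 2 := by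
    rw [hnorm, key, huu, hvv, hvu, Complex.mul_conj, mul_comm (starRingEnd ℂ _) _,
      Complex.mul_conj, Complex.normSq_eq_norm_sq]
    push_cast; ring
  have h2 : ((‖w‖ ^ 2 : ℝ) : ℂ) = ((1 / 2 + ‖(⟪u, v⟫_ℂ)‖ ^ 2 / 2 : ℝ) : ℂ) := by
    push_cast; exact this
  exact_mod_cast h2
end
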